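/- arXiv:2405.02833 — 4 statements merged into one kernel-verified Lean document; each statement's English description precedes it below -/
import Mathlib

section
/- Let F be a continuous distribution function on ℝ and for each n ∈ ℕ let δ_n be an n-variate copula diagonal. Assume: (i) there exist a GEV distribution function H, sequences (c*_n), c*_n > 0, and (d*_n), and a map β* : ℕ → [0,∞) with β*(n) → 0 such that sup_{x∈ℝ} |F(c*_n x + d*_n)^n − H(x)| ≤ β*(n) for all n; (ii) there exist a rate r : ℕ → (0,∞) with r_n → ∞, a function D : [0,1] → [0,1], and s : ℕ → [0,∞) with s(n) → 0 such that sup_{u∈[0,1]} |δ_n(u^{1/r_n}) − D(u)| ≤ s(n) for all n; (iii) D is Hölder continuous with constant K and exponent κ ∈ (0,1], i.e., |D(u) − D(v)| ≤ K|u − v|^κ for all u, v ∈ [0,1]. Then for all n, sup_{x∈ℝ} |δ_n(F(c*_{⌈r_n⌉} x + d*_{⌈r_n⌉})) − D(H(x))| ≤ K(β*(⌈r_n⌉) + 3 e^{−1} · 1_{{r_n ∉ ℕ}} / r_n)^κ + s(n), and the right-hand side converges to 0 as n → ∞. (Theorem: uniform convergence rate under dependence.) -/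
open Filter Set Topology

/-- The generalized extreme value (GEV) distribution function `H_{ξ,μ,σ}`. -/
noncomputable def GEVcdf (ξ μ σ : ℝ) : ℝ → ℝ := fun x =>
  if ξ = 0 then Real.exp (-Real.exp (-(x - μ) / σ))
  else if 0 < 1 + ξ * (x - μ) / σ then Real.exp (-(1 + ξ * (x - μ) / σ) ^ (-1 / ξ))
  else if 0 < ξ then 0 else 1

/-- A distribution function is GEV if it equals some `H_{ξ,μ,σ}` with `σ > 0`. -/
def IsGEV (H : ℝ → ℝ) : Prop := ∃ ξ μ σ : ℝ, 0 < σ ∧ H = GEVcdf ξ μ σ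

/-- A distribution function on `ℝ`: nondecreasing, right-continuous, with limits 0 at `-∞`
and 1 at `∞`, taking values in `[0,1]`. -/
def IsDistFun (F : ℝ → ℝ) : Prop :=
  Monotone F ∧ (∀ x, ContinuousWithinAt F (Ici x) x) ∧
    Tendsto F atBot (nhds 0) ∧ Tendsto F atTop (nhds 1) ∧ ∀ x, F x ∈ Icc (0:ℝ) 1

/-- The properties of the diagonal `u ↦ C_n(u,…,u)` of an `n`-dimensional copula. -/
def IsCopulaDiagonal (n : ℕ) (δ : ℝ → ℝ) : Prop :=
  δ 0 = 0 ∧ δ 1 = 1 ∧ MonotoneOn δ (Icc 0 1) ∧ (∀ u ∈ Icc (0:ℝ) 1, δ u ≤ u) ∧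
    ∀ u ∈ Icc (0:ℝ) 1, ∀ v ∈ Icc (0:ℝ) 1, |δ u - δ v| ≤ (n : ℝ) * |u - v|

/-- A distribution function on `[0,1]`: nondecreasing, right-continuous, `D(0)=0`, `D(1)=1`,
with values in `[0,1]`. -/
def IsDistFun01 (D : ℝ → ℝ) : Prop :=
  D 0 = 0 ∧ D 1 = 1 ∧ MonotoneOn D (Icc 0 1) ∧
    (∀ u ∈ Ico (0:ℝ) 1, ContinuousWithinAt D (Icc u 1) u) ∧
    ∀ u ∈ Icc (0:ℝ) 1, D u ∈ Icc (0:ℝ) 1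

/-- A degenerate distribution function `x ↦ 1_{[a,∞)}(x)`. -/
noncomputable def IsDegenerateDF (G : ℝ → ℝ) : Prop :=
  ∃ a : ℝ, ∀ x, G x = if a ≤ x then 1 else 0

/-- An Archimedean generator: continuous on `[0,∞)`, `ψ(0)=1`, values in `[0,1]`,
`ψ(t) → 0` as `t → ∞`, strictly decreasing on `[0, inf{x : ψ(x)=0}]` (equivalently,
strictly decreasing as long as it is positive). -/
def IsArchimedeanGenerator (ψ : ℝ → ℝ) : Prop :=
  ContinuousOn ψ (Ici 0) ∧ ψ 0 = 1 ∧ (∀ t ∈ Ici (0:ℝ), ψ t ∈ Icc (0:ℝ) 1) ∧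
    Tendsto ψ atTop (nhds 0) ∧
    ∀ s t : ℝ, 0 ≤ s → s < t → 0 < ψ s → ψ t < ψ s

/-! For `q = F(c*_m x + d*_m)` with `m = ⌈r_n⌉`, the copula approximation at `u = q^{r_n}` gives
`δ_n(q) ≈ D(q^{r_n})`, and Hölder continuity of `D` reduces the claim to bounding
`|q^{r_n} - H(x)| ≤ |q^{r_n} - q^m| + |q^m - H(x)|`. The second term is at most `β*(m)` by
assumption; the first vanishes when `r_n` is an integer and is otherwise at most `e⁻¹ / r_n`,
because `q^t - q^{t'} ≤ q^t (t' - t) log(1/q)` and `y e^{-y} ≤ e⁻¹` for `y = t log(1/q)`. -/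

open Real

theorem rpow_sub_rpow_le_exp_neg_one_div {q t t' : ℝ} (hq : q ∈ Icc (0:ℝ) 1) (ht : 0 < t)
    (htt' : t ≤ t') (ht' : t' ≤ t + 1) : q ^ t - q ^ t' ≤ exp (-1) / t := by
  rcases hq.1.eq_or_lt with rfl | hq0
  · rw [zero_rpow ht.ne', zero_rpow (ht.trans_le htt').ne', sub_zero]
    positivity
  set y := -log q
  have hy : 0 ≤ y := neg_nonneg.2 (log_nonpos hq.1 hq.2)
  have hpow : ∀ a, q ^ a = exp (-(a * y)) := fun a => by
    rw [rpow_def_of_pos hq0]; simp only [y]; ring_nf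
  calc q ^ t - q ^ t' = exp (-(t * y)) * (1 - exp (-((t' - t) * y))) := by
        rw [hpow, hpow, mul_sub, ← exp_add]; ring_nf
    _ ≤ exp (-(t * y)) * y := by
        gcongr
        nlinarith [add_one_le_exp (-((t' - t) * y))]
    _ = t * y * exp (-(t * y)) / t := by field_simp
    _ ≤ exp (-1) / t := by gcongr; exact mul_exp_neg_le_exp_neg_one _

open scoped Classical in
theorem abs_rpow_sub_pow_ceil_le {q r : ℝ} (hq : q ∈ Icc (0:ℝ) 1) (hr : 0 < r) :
    |q ^ r - q ^ ⌈r⌉₊| ≤ 3 * exp (-1) * (if ∃ m : ℕ, r = m then 0 else 1) / r := by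
  split_ifs with hint
  · obtain ⟨m, rfl⟩ := hint
    simp
  · have hle : q ^ ⌈r⌉₊ ≤ q ^ r := by
      rw [← rpow_natCast]
      exact rpow_le_rpow_of_exponent_ge' hq.1 hq.2 hr.le (Nat.le_ceil r)
    rw [abs_of_nonneg (sub_nonneg.2 hle), ← rpow_natCast]
    calc _ ≤ exp (-1) / r := rpow_sub_rpow_le_exp_neg_one_div hq hr (Nat.le_ceil r)
          (Nat.ceil_lt_add_one hr.le).le
      _ ≤ 3 * exp (-1) * 1 / r := by gcongr; linarith [exp_pos (-1)]

open scoped Classical in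
theorem tendsto_mul_ite_div_atTop {r : ℕ → ℝ} (c : ℝ) (hr : Tendsto r atTop atTop) :
    Tendsto (fun n => c * (if ∃ m : ℕ, r n = m then 0 else 1) / r n) atTop (𝓝 0) := by
  refine squeeze_zero_norm (a := fun n => ‖c / r n‖) (fun n => ?_) ?_
  · split_ifs
    · simp only [mul_zero, zero_div, norm_zero]; positivity
    · simp
  · simpa using (tendsto_const_nhds (x := c)).div_atTop hr |>.norm

theorem IsGEV.mem_Icc {H : ℝ → ℝ} (hH : IsGEV H) (x : ℝ) : H x ∈ Icc (0:ℝ) 1 := by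
  obtain ⟨ξ, μ, σ, -, rfl⟩ := hH
  unfold GEVcdf
  split_ifs
  all_goals first
    | exact ⟨le_rfl, zero_le_one⟩
    | exact ⟨zero_le_one, le_rfl⟩
    | exact ⟨(exp_pos _).le, exp_le_one_iff.2 (neg_nonpos.2 (by positivity))⟩

section Holder

variable {D : ℝ → ℝ} {K κ : ℝ}

theorem nonneg_of_holder
    (hD : ∀ u ∈ Icc (0:ℝ) 1, ∀ v ∈ Icc (0:ℝ) 1, |D u - D v| ≤ K * |u - v| ^ κ) : 0 ≤ K := by
  have h := hD 0 ⟨le_rfl, zero_le_one⟩ 1 ⟨zero_le_one, le_rfl⟩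
  norm_num at h
  exact (abs_nonneg _).trans h

theorem abs_sub_le_of_holder
    (hD : ∀ u ∈ Icc (0:ℝ) 1, ∀ v ∈ Icc (0:ℝ) 1, |D u - D v| ≤ K * |u - v| ^ κ) (hκ : 0 ≤ κ)
    {u v ε : ℝ} (hu : u ∈ Icc (0:ℝ) 1) (hv : v ∈ Icc (0:ℝ) 1) (huv : |u - v| ≤ ε) :
    |D u - D v| ≤ K * ε ^ κ :=
  (hD u hu v hv).trans <| by
    gcongr
    exact nonneg_of_holder hD

open scoped Classical in
theorem abs_diag_sub_le_of_holder {δ : ℝ → ℝ} {q h r b s : ℝ}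
    (hD : ∀ u ∈ Icc (0:ℝ) 1, ∀ v ∈ Icc (0:ℝ) 1, |D u - D v| ≤ K * |u - v| ^ κ) (hκ : 0 ≤ κ)
    (hδ : ∀ u ∈ Icc (0:ℝ) 1, |δ (u ^ (1 / r)) - D u| ≤ s) (hr : 0 < r)
    (hq : q ∈ Icc (0:ℝ) 1) (hh : h ∈ Icc (0:ℝ) 1) (hb : |q ^ ⌈r⌉₊ - h| ≤ b) :
    |δ q - D h| ≤
      K * (b + 3 * exp (-1) * (if ∃ m : ℕ, r = m then 0 else 1) / r) ^ κ + s := by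
  have hqr : q ^ r ∈ Icc (0:ℝ) 1 := ⟨rpow_nonneg hq.1 _, rpow_le_one hq.1 hq.2 hr.le⟩
  have hδq : |δ q - D (q ^ r)| ≤ s := by
    have h := hδ _ hqr
    rwa [← rpow_mul hq.1, mul_one_div_cancel hr.ne', rpow_one] at h
  have hqrh : |q ^ r - h| ≤ b + 3 * exp (-1) * (if ∃ m : ℕ, r = m then 0 else 1) / r := by
    rw [add_comm]
    exact (abs_sub_le _ _ _).trans (add_le_add (abs_rpow_sub_pow_ceil_le hq hr) hb)
  calc |δ q - D h| ≤ |δ q - D (q ^ r)| + |D (q ^ r) - D h| := abs_sub_le _ _ _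
    _ ≤ s + K * (b + 3 * exp (-1) * (if ∃ m : ℕ, r = m then 0 else 1) / r) ^ κ :=
        add_le_add hδq (abs_sub_le_of_holder hD hκ hqr hh hqrh)
    _ = _ := add_comm _ _

end Holder

open scoped Classical in
theorem uniform_convergence_rate_dependence_general
    (F H D : ℝ → ℝ) (cs ds : ℕ → ℝ) (δ : ℕ → ℝ → ℝ) (r : ℕ → ℝ)
    (β s : ℕ → ℝ) (K κ : ℝ)
    (hF : IsDistFun F)
    (hH : IsGEV H)
    (hβ : Tendsto β atTop (nhds 0))
    (hβbound : ∀ n x, |F (cs n * x + ds n) ^ n - H x| ≤ β n)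
    (hr : ∀ n, 0 < r n) (hrtop : Tendsto r atTop atTop)
    (hs : Tendsto s atTop (nhds 0))
    (hsbound : ∀ n, ∀ u ∈ Icc (0:ℝ) 1, |δ n (u ^ (1 / r n)) - D u| ≤ s n)
    (hκ : κ ∈ Ioc (0:ℝ) 1)
    (hHolder : ∀ u ∈ Icc (0:ℝ) 1, ∀ v ∈ Icc (0:ℝ) 1, |D u - D v| ≤ K * |u - v| ^ κ) :
    (∀ n x, |δ n (F (cs (Nat.ceil (r n)) * x + ds (Nat.ceil (r n)))) - D (H x)| ≤
      K * (β (Nat.ceil (r n)) +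
        3 * Real.exp (-1) * (if ∃ m : ℕ, r n = (m : ℝ) then 0 else 1) / r n) ^ κ + s n) ∧
    Tendsto (fun n => K * (β (Nat.ceil (r n)) +
        3 * Real.exp (-1) * (if ∃ m : ℕ, r n = (m : ℝ) then 0 else 1) / r n) ^ κ + s n)
      atTop (nhds 0) := by
  refine ⟨fun n x => abs_diag_sub_le_of_holder hHolder hκ.1.le (hsbound n) (hr n)
    (hF.2.2.2.2 _) (hH.mem_Icc x) (hβbound _ x), ?_⟩
  have hbase : Tendsto (fun n => β ⌈r n⌉₊ +
      3 * exp (-1) * (if ∃ m : ℕ, r n = (m : ℝ) then 0 else 1) / r n) atTop (𝓝 0) := by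
    simpa using (hβ.comp (tendsto_nat_ceil_atTop.comp hrtop)).add
      (tendsto_mul_ite_div_atTop (3 * exp (-1)) hrtop)
  have hrpow := (continuousAt_rpow_const 0 κ (Or.inr hκ.1.le)).tendsto.comp hbase
  simpa [zero_rpow hκ.1.ne'] using (hrpow.const_mul K).add hs

open scoped Classical in
/-- Theorem: uniform convergence rate under dependence. -/
theorem uniform_convergence_rate_dependence
    (F H D : ℝ → ℝ) (cs ds : ℕ → ℝ) (δ : ℕ → ℝ → ℝ) (r : ℕ → ℝ)
    (β s : ℕ → ℝ) (K κ : ℝ)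
    (hF : IsDistFun F) (hFcont : Continuous F)
    (hδ : ∀ n, IsCopulaDiagonal n (δ n))
    (hH : IsGEV H) (hcs : ∀ n, 0 < cs n)
    (hβ0 : ∀ n, 0 ≤ β n) (hβ : Tendsto β atTop (nhds 0))
    (hβbound : ∀ n x, |F (cs n * x + ds n) ^ n - H x| ≤ β n)
    (hr : ∀ n, 0 < r n) (hrtop : Tendsto r atTop atTop)
    (hDmap : ∀ u ∈ Icc (0:ℝ) 1, D u ∈ Icc (0:ℝ) 1)
    (hs0 : ∀ n, 0 ≤ s n) (hs : Tendsto s atTop (nhds 0))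
    (hsbound : ∀ n, ∀ u ∈ Icc (0:ℝ) 1, |δ n (u ^ (1 / r n)) - D u| ≤ s n)
    (hκ : κ ∈ Ioc (0:ℝ) 1)
    (hHolder : ∀ u ∈ Icc (0:ℝ) 1, ∀ v ∈ Icc (0:ℝ) 1, |D u - D v| ≤ K * |u - v| ^ κ) :
    (∀ n x, |δ n (F (cs (Nat.ceil (r n)) * x + ds (Nat.ceil (r n)))) - D (H x)| ≤
      K * (β (Nat.ceil (r n)) +
        3 * Real.exp (-1) * (if ∃ m : ℕ, r n = (m : ℝ) then 0 else 1) / r n) ^ κ + s n) ∧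
    Tendsto (fun n => K * (β (Nat.ceil (r n)) +
        3 * Real.exp (-1) * (if ∃ m : ℕ, r n = (m : ℝ) then 0 else 1) / r n) ^ κ + s n)
      atTop (nhds 0) :=
  uniform_convergence_rate_dependence_general F H D cs ds δ r β s K κ hF hH hβ hβbound hr hrtop hs
    hsbound hκ hHolder
end

section
/- Let F be a continuous distribution function on ℝ, and suppose for each n ∈ ℕ the copula diagonal is a power, δ_n(u) = u^{η_n} for u ∈ [0,1], where η_n ≥ 1 and η_n → ∞ as n → ∞. Assume there exist a GEV distribution function H, sequences (c*_n), c*_n > 0, and (d*_n), and β* : ℕ → [0,∞) with β*(n) → 0 such that sup_{x∈ℝ} |F(c*_n x + d*_n)^n − H(x)| ≤ β*(n) for all n. Then for all n, sup_{x∈ℝ} |F(c*_{⌈η_n⌉} x + d*_{⌈η_n⌉})^{η_n} − H(x)| ≤ β*(⌈η_n⌉) + 3 e^{−1} · 1_{{η_n ∉ ℕ}} / η_n. Additionally, if β* is monotonically decreasing and η_n ≤ n for all n (as holds when the underlying n-dimensional copula is positively quadrant dependent, i.e., u^n ≤ u^{η_n} for all u ∈ [0,1]), then β*(⌈η_n⌉)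 ≥ β*(n). (Corollary on convergence rates for sequences with power diagonals.) -/
open Filter Set Topology

/-! Replacing the exponent `η` by the integer `⌈η⌉` moves `y ^ η`, `y ∈ [0, 1]`, by at most
`(⌈η⌉ - η) / (e η)`: with `t = -log y`, `y ^ a - y ^ b = e^{-a t} (1 - e^{-(b - a) t}) ≤ (b - a) t e^{-a t}`,
and `s e^{-s} ≤ e^{-1}`. The gap `⌈η⌉ - η` is below `1` and vanishes when `η` is an integer. -/

theorem Real.exp_neg_mul_sub_exp_neg_mul_le {a b : ℝ} (ha : 0 < a) (hab : a ≤ b) (t : ℝ) :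
    Real.exp (-(a * t)) - Real.exp (-(b * t)) ≤ (b - a) * Real.exp (-1) / a := by
  have hsplit : Real.exp (-(a * t)) - Real.exp (-(b * t))
      = Real.exp (-(a * t)) * (1 - Real.exp (-((b - a) * t))) := by
    rw [mul_sub, mul_one, ← Real.exp_add]; ring_nf
  have hlin : 1 - Real.exp (-((b - a) * t)) ≤ (b - a) * t := by
    linarith [Real.add_one_le_exp (-((b - a) * t))]
  calc Real.exp (-(a * t)) - Real.exp (-(b * t))
      ≤ Real.exp (-(a * t)) * ((b - a) * t) := by
        rw [hsplit]; exact mul_le_mul_of_nonneg_left hlin (Real.exp_nonneg _)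
    _ = (b - a) / a * (a * t * Real.exp (-(a * t))) := by field_simp
    _ ≤ (b - a) / a * Real.exp (-1) := by
        gcongr
        exact Real.mul_exp_neg_le_exp_neg_one _
    _ = (b - a) * Real.exp (-1) / a := by ring

theorem Real.rpow_sub_rpow_le_of_le {y a b : ℝ} (hy : 0 ≤ y) (ha : 0 < a) (hab : a ≤ b) :
    y ^ a - y ^ b ≤ (b - a) * Real.exp (-1) / a := by
  rcases hy.eq_or_lt with rfl | hy
  · rw [Real.zero_rpow ha.ne', Real.zero_rpow (ha.trans_le hab).ne', sub_zero]
    exact div_nonneg (mul_nonneg (sub_nonneg.mpr hab) (Real.exp_nonneg _)) ha.le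
  · have hexp (c : ℝ) : y ^ c = Real.exp (-(c * -Real.log y)) := by
      rw [Real.rpow_def_of_pos hy]; ring_nf
    rw [hexp a, hexp b]
    exact Real.exp_neg_mul_sub_exp_neg_mul_le ha hab _

theorem Real.abs_rpow_sub_rpow_le_of_le {y a b : ℝ} (hy₀ : 0 ≤ y) (hy₁ : y ≤ 1) (ha : 0 < a)
    (hab : a ≤ b) : |y ^ a - y ^ b| ≤ (b - a) * Real.exp (-1) / a := by
  rw [abs_of_nonneg (sub_nonneg.mpr (Real.rpow_le_rpow_of_exponent_ge' hy₀ hy₁ ha.le hab))]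
  exact Real.rpow_sub_rpow_le_of_le hy₀ ha hab

open scoped Classical in
theorem Nat.ceil_sub_self_le_ite {K : Type*} [Field K] [LinearOrder K] [IsStrictOrderedRing K]
    [FloorSemiring K] {x : K} (hx : 0 ≤ x) :
    (⌈x⌉₊ : K) - x ≤ if ∃ m : ℕ, x = m then 0 else 1 := by
  split_ifs with hint
  · obtain ⟨m, rfl⟩ := hint
    simp
  · linarith [Nat.ceil_lt_add_one hx]

open scoped Classical in
theorem power_diagonal_convergence_rate_general
    (F H : ℝ → ℝ) (cs ds : ℕ → ℝ) (η β : ℕ → ℝ)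
    (hF : IsDistFun F)
    (hη1 : ∀ n, 1 ≤ η n)
    (hβbound : ∀ n x, |F (cs n * x + ds n) ^ n - H x| ≤ β n) :
    (∀ n x, |F (cs (Nat.ceil (η n)) * x + ds (Nat.ceil (η n))) ^ (η n) - H x| ≤
      β (Nat.ceil (η n)) +
        3 * Real.exp (-1) * (if ∃ m : ℕ, η n = (m : ℝ) then 0 else 1) / η n) ∧
    (Antitone β → (∀ n, η n ≤ (n : ℝ)) → ∀ n, β n ≤ β (Nat.ceil (η n))) := by
  refine ⟨fun n x => ?_, fun hβanti hηle n => hβanti (Nat.ceil_le.mpr (hηle n))⟩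
  have hη : 0 < η n := one_pos.trans_le (hη1 n)
  set m := ⌈η n⌉₊
  set y := F (cs m * x + ds m)
  obtain ⟨hy₀, hy₁⟩ := hF.2.2.2.2 (cs m * x + ds m)
  have hgap := Real.abs_rpow_sub_rpow_le_of_le hy₀ hy₁ hη (Nat.le_ceil (η n))
  have hceil := Nat.ceil_sub_self_le_ite hη.le
  have hind : (0 : ℝ) ≤ if ∃ k : ℕ, η n = k then 0 else 1 := by split_ifs <;> norm_num
  have hβm : |y ^ (m : ℝ) - H x| ≤ β m := by simpa [Real.rpow_natCast] using hβbound m x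
  calc |y ^ η n - H x| ≤ |y ^ η n - y ^ (m : ℝ)| + |y ^ (m : ℝ) - H x| := abs_sub_le _ _ _
    _ ≤ (m - η n) * Real.exp (-1) / η n + β m := add_le_add hgap hβm
    _ ≤ β m + 3 * Real.exp (-1) * (if ∃ k : ℕ, η n = k then 0 else 1) / η n := by
        have hnum : (m - η n) * Real.exp (-1)
            ≤ 3 * Real.exp (-1) * (if ∃ k : ℕ, η n = k then 0 else 1) := by
          nlinarith [Real.exp_pos (-1)]
        linarith [div_le_div_of_nonneg_right hnum hη.le]

open scoped Classical in
/-- Corollary on convergence rates for sequences with power diagonals. -/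
theorem power_diagonal_convergence_rate
    (F H : ℝ → ℝ) (cs ds : ℕ → ℝ) (η β : ℕ → ℝ)
    (hF : IsDistFun F) (hFcont : Continuous F)
    (hη1 : ∀ n, 1 ≤ η n) (hηtop : Tendsto η atTop atTop)
    (hH : IsGEV H) (hcs : ∀ n, 0 < cs n)
    (hβ0 : ∀ n, 0 ≤ β n) (hβ : Tendsto β atTop (nhds 0))
    (hβbound : ∀ n x, |F (cs n * x + ds n) ^ n - H x| ≤ β n) :
    (∀ n x, |F (cs (Nat.ceil (η n)) * x + ds (Nat.ceil (η n))) ^ (η n) - H x| ≤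
      β (Nat.ceil (η n)) +
        3 * Real.exp (-1) * (if ∃ m : ℕ, η n = (m : ℝ) then 0 else 1) / η n) ∧
    (Antitone β → (∀ n, η n ≤ (n : ℝ)) → ∀ n, β n ≤ β (Nat.ceil (η n))) :=
  power_diagonal_convergence_rate_general F H cs ds η β hF hη1 hβbound
end

section
/- Fix a > 0 and let (b_n) be a real sequence with b_n → 0 as n → ∞. Then for all sufficiently large n — specifically, whenever b_n ∈ (−a log 2, a log 2 / (1 − log 2)) — one has sup_{u∈[0,1]} |u^a − u^{a+b_n}| ≤ 3 e^{−1} |b_n| / a. -/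
open Filter Set Topology

/-! Writing `v = u ^ q`, one has `u ^ p = v ^ (1 - t)` with `t = (q - p) / q`, and the weighted
AM-GM inequality `v ^ (1 - t) * 1 ^ t ≤ (1 - t) v + t` gives `u ^ p - u ^ q ≤ (q - p) / q`
for `p ≤ q`. Hence `|u ^ a - u ^ (a + b)| ≤ |b| / max a (a + b) ≤ |b| / a`, which is at most
`3 e⁻¹ |b| / a` because `e < 3`. -/

lemma Real.rpow_one_sub_le_add {v t : ℝ} (hv : 0 ≤ v) (ht0 : 0 ≤ t) (ht1 : t ≤ 1) :
    v ^ (1 - t) ≤ v + t := by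
  have h := Real.geom_mean_le_arith_mean2_weighted (w₁ := 1 - t) (w₂ := t)
    (p₁ := v) (p₂ := 1) (by linarith) ht0 hv zero_le_one (by ring)
  rw [Real.one_rpow, mul_one] at h
  nlinarith

lemma Real.rpow_sub_rpow_le_of_le_s17 {u p q : ℝ} (hu : 0 ≤ u) (hp : 0 ≤ p) (hpq : p ≤ q)
    (hq : 0 < q) : u ^ p - u ^ q ≤ (q - p) / q := by
  have hpow : u ^ p = (u ^ q) ^ (1 - (q - p) / q) := by
    rw [← Real.rpow_mul hu]
    congr 1
    field_simp
    ring
  have ht0 : 0 ≤ (q - p) / q := div_nonneg (by linarith) hq.le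
  have ht1 : (q - p) / q ≤ 1 := by rw [div_le_one hq]; linarith
  rw [hpow]
  linarith [Real.rpow_one_sub_le_add (Real.rpow_nonneg hu q) ht0 ht1]

lemma Real.abs_rpow_sub_rpow_le {u p q : ℝ} (hu : u ∈ Icc (0 : ℝ) 1) (hp : 0 < p) (hq : 0 < q) :
    |u ^ p - u ^ q| ≤ |p - q| / max p q := by
  wlog hpq : p ≤ q generalizing p q
  · rw [abs_sub_comm, abs_sub_comm p, max_comm]
    exact this hq hp (le_of_not_ge hpq)
  have hmono : u ^ q ≤ u ^ p := Real.rpow_le_rpow_of_exponent_ge' hu.1 hu.2 hp.le hpq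
  rw [abs_sub_comm p, abs_of_nonneg (by linarith), max_eq_right hpq,
    abs_of_nonneg (by linarith)]
  exact Real.rpow_sub_rpow_le_of_le_s17 hu.1 hp.le hpq hq

lemma one_le_three_mul_exp_neg_one : (1 : ℝ) ≤ 3 * Real.exp (-1) := by
  rw [Real.exp_neg, ← div_eq_mul_inv, le_div_iff₀ (Real.exp_pos 1), one_mul]
  linarith [Real.exp_one_lt_d9]

theorem sup_abs_rpow_perturbation_general (a : ℝ) (ha : 0 < a) (b : ℕ → ℝ) :
    ∀ n : ℕ, b n ∈ Ioo (-(a * Real.log 2)) (a * Real.log 2 / (1 - Real.log 2)) →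
      ∀ u ∈ Icc (0:ℝ) 1, |u ^ a - u ^ (a + b n)| ≤ 3 * Real.exp (-1) * |b n| / a := by
  intro n hbn u hu
  have hab : 0 < a + b n := by
    nlinarith [hbn.1, Real.log_two_lt_d9]
  calc |u ^ a - u ^ (a + b n)|
      ≤ |a - (a + b n)| / max a (a + b n) := Real.abs_rpow_sub_rpow_le hu ha hab
    _ ≤ |b n| / a := by
        rw [sub_add_cancel_left, abs_neg]
        exact div_le_div_of_nonneg_left (abs_nonneg _) ha (le_max_left _ _)
    _ ≤ 3 * Real.exp (-1) * |b n| / a := by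
        gcongr
        exact le_mul_of_one_le_left (abs_nonneg _) one_le_three_mul_exp_neg_one

/-- Lemma A.3(ii): uniform bound on `|u^a − u^{a+b_n}|` for large `n`. -/
theorem sup_abs_rpow_perturbation (a : ℝ) (ha : 0 < a) (b : ℕ → ℝ)
    (hb : Tendsto b atTop (nhds 0)) :
    ∀ n : ℕ, b n ∈ Ioo (-(a * Real.log 2)) (a * Real.log 2 / (1 - Real.log 2)) →
      ∀ u ∈ Icc (0:ℝ) 1, |u ^ a - u ^ (a + b n)| ≤ 3 * Real.exp (-1) * |b n| / a :=
  sup_abs_rpow_perturbation_general a ha b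
end

section
/- Let F : ℝ → [0,1] be a distribution function on ℝ and let (r_n) be a sequence of positive real numbers with r_n → ∞. Then for every n ∈ ℕ, sup_{x∈ℝ} |F(x)^{⌈r_n⌉} − F(x)^{r_n}| ≤ 3 e^{−1} / r_n (the bound being trivially true when 3 e^{−1}/r_n ≥ 1), and the right-hand side tends to 0 as n → ∞. -/
open Filter Set Topology

lemma key_bound (t ρ : ℝ) (ht0 : 0 < t) (ht1 : t ≤ 1) (hρ : 0 < ρ) :
    t ^ ρ * (1 - t) ≤ Real.exp (-1) / ρ := by
  have hlog : Real.log t ≤ 0 := Real.log_nonpos ht0.le ht1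
  set u := -(ρ * Real.log t) with hu
  have hu0 : 0 ≤ u := by nlinarith
  have h1 : 1 - t ≤ -Real.log t := by
    have := Real.log_le_sub_one_of_pos ht0
    linarith
  have h2 : t ^ ρ = Real.exp (-u) := by
    rw [Real.rpow_def_of_pos ht0, hu]; ring_nf
  have h3 : u * Real.exp (-u) ≤ Real.exp (-1) := by
    have hb := Real.add_one_le_exp (u - 1)
    have : u * Real.exp (-u) ≤ Real.exp (u - 1) * Real.exp (-u) := by
      nlinarith [Real.exp_pos (-u)]
    calc u * Real.exp (-u) ≤ Real.exp (u - 1) * Real.exp (-u) := this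
      _ = Real.exp (-1) := by rw [← Real.exp_add]; ring_nf
  have h4 : -Real.log t = u / ρ := by
    field_simp [hu]; ring
  calc t ^ ρ * (1 - t) ≤ Real.exp (-u) * (u / ρ) := by
        rw [h2]
        apply mul_le_mul_of_nonneg_left _ (Real.exp_pos (-u)).le
        rw [← h4]; exact h1
    _ ≤ Real.exp (-1) / ρ := by
        rw [mul_div_assoc']
        apply div_le_div_of_nonneg_right _ hρ.le  -- maybe wrong name
        · nlinarith [Real.exp_pos (-u)]

/-- Corollary: uniform bound on `|F(x)^{⌈r_n⌉} − F(x)^{r_n}|`. -/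
theorem sup_abs_pow_ceil_sub_pow (F : ℝ → ℝ) (hF : IsDistFun F)
    (r : ℕ → ℝ) (hr : ∀ n, 0 < r n) (hrtop : Tendsto r atTop atTop) :
    (∀ n : ℕ, ∀ x : ℝ,
      |F x ^ ((Nat.ceil (r n) : ℕ) : ℝ) - F x ^ r n| ≤ 3 * Real.exp (-1) / r n) ∧
    Tendsto (fun n => 3 * Real.exp (-1) / r n) atTop (nhds 0) := by
  constructor
  · intro n x
    set t := F x with ht
    set ρ := r n with hρdef
    have hρ : 0 < ρ := hr n
    have ht01 : t ∈ Icc (0:ℝ) 1 := hF.2.2.2.2 x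
    have hRHS : 0 < 3 * Real.exp (-1) / ρ := by positivity
    have ha1 : ρ ≤ ((Nat.ceil ρ : ℕ) : ℝ) := Nat.le_ceil ρ
    have ha2 : ((Nat.ceil ρ : ℕ) : ℝ) < ρ + 1 := Nat.ceil_lt_add_one hρ.le
    rcases eq_or_lt_of_le ht01.1 with h0 | h0
    · rw [← h0]
      rw [Real.zero_rpow hρ.ne', Real.zero_rpow (by positivity : ((Nat.ceil ρ : ℕ) : ℝ) ≠ 0)]
      simpa using hRHS.le
    · set a := ((Nat.ceil ρ : ℕ) : ℝ) with hadef
      have hle : t ^ a ≤ t ^ ρ := Real.rpow_le_rpow_of_exponent_ge h0 ht01.2 ha1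
      have habs : |t ^ a - t ^ ρ| = t ^ ρ - t ^ a := by
        rw [abs_sub_comm, abs_of_nonneg (by linarith)]
      rw [habs]
      have hsplit : t ^ a = t ^ ρ * t ^ (a - ρ) := by
        rw [← Real.rpow_add h0]; ring_nf
      have hge : t ≤ t ^ (a - ρ) := by
        have := Real.rpow_le_rpow_of_exponent_ge h0 ht01.2 (by linarith : a - ρ ≤ 1)
        simpa using this
      have h6 : t ^ ρ - t ^ a ≤ t ^ ρ * (1 - t) := by
        rw [hsplit]
        have htρ : 0 ≤ t ^ ρ := (Real.rpow_pos_of_pos h0 ρ).le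
        nlinarith
      have h7 := key_bound t ρ h0 ht01.2 hρ
      have h8 : Real.exp (-1) / ρ ≤ 3 * Real.exp (-1) / ρ := by
        apply div_le_div_of_nonneg_right _ hρ.le
        nlinarith [Real.exp_pos (-1:ℝ)]
      linarith
  · exact tendsto_const_nhds.div_atTop hrtop
end
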